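/- Let n ≥ 4. The endomorphism α_p of A[Ã_n] is neither injective nor surjective: it is not injective because α_p(t_0) = α_p(v_0) while t_0 ≠ v_0, and not surjective because its image is contained in the proper standard parabolic subgroup A_Y generated by t_1, ..., t_n, which does not contain t_0. -/

import Mathlib

open FreeGroup in
/-- Defining relations of the Artin group of affine type `Ã n` (`n ≥ 2`):
generators `t i` indexed by `ZMod (n+1)`, braid relations between cyclically
adjacent generators and commuting relations otherwise. -/
def ArtinAffineARels (n : ℕ) : Set (FreeGroup (ZMod (n + 1))) :=
  {w | ∃ i j : ZMod (n + 1),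
    (j = i + 1 ∧ w = of i * of j * of i * (of j * of i * of j)⁻¹) ∨
    (i ≠ j ∧ j ≠ i + 1 ∧ i ≠ j + 1 ∧ w = of i * of j * (of j * of i)⁻¹)}

/-- The Artin group of affine type `Ã n`. -/
def ArtinAffineA (n : ℕ) : Type := PresentedGroup (ArtinAffineARels n)

instance (n : ℕ) : Group (ArtinAffineA n) :=
  inferInstanceAs (Group (PresentedGroup (ArtinAffineARels n)))

/-- The standard generator `t i` of `A[Ã n]`. -/
def tA (n : ℕ) (i : ZMod (n + 1)) : ArtinAffineA n := PresentedGroup.of i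

/-- `t₁ t₂ ⋯ t_{n-1}` in `A[Ã n]`. -/
def wpos (n : ℕ) : ArtinAffineA n :=
  ((List.range (n - 1)).map (fun k => tA n ((k + 1 : ℕ) : ZMod (n + 1)))).prod

/-- `t₁⁻¹ t₂⁻¹ ⋯ t_{n-1}⁻¹` in `A[Ã n]`. -/
def wneg (n : ℕ) : ArtinAffineA n :=
  ((List.range (n - 1)).map (fun k => (tA n ((k + 1 : ℕ) : ZMod (n + 1)))⁻¹)).prod

/-- `v₀ = t₁ ⋯ t_{n-1} tₙ t_{n-1}⁻¹ ⋯ t₁⁻¹` in `A[Ã n]`. -/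
def vZero (n : ℕ) : ArtinAffineA n :=
  wpos n * tA n ((n : ℕ) : ZMod (n + 1)) * (wpos n)⁻¹

/-- `v₁ = t₁⁻¹ ⋯ t_{n-1}⁻¹ tₙ t_{n-1} ⋯ t₁` in `A[Ã n]`. -/
def vOne (n : ℕ) : ArtinAffineA n :=
  wneg n * tA n ((n : ℕ) : ZMod (n + 1)) * (wneg n)⁻¹

/-- The Garside element `Δ_Y` of the standard parabolic subgroup of `A[Ã n]`
generated by `Y = {t₁, …, tₙ}` (which is isomorphic to `A[A n]`). -/
def deltaY (n : ℕ) : ArtinAffineA n :=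
  ((List.range n).reverse.map
    (fun k => ((List.range (k + 1)).map
      (fun i => tA n ((i + 1 : ℕ) : ZMod (n + 1)))).prod)).prod

/-- The standard parabolic subgroup `A_Y` of `A[Ã n]` generated by `t₁, …, tₙ`. -/
def parabolicY (n : ℕ) : Subgroup (ArtinAffineA n) :=
  Subgroup.closure {g | ∃ i : ℕ, 1 ≤ i ∧ i ≤ n ∧ g = tA n (i : ZMod (n + 1))}

lemma relEqOne {n : ℕ} {r : FreeGroup (ZMod (n+1))} (h : r ∈ ArtinAffineARels n) :
    PresentedGroup.mk (ArtinAffineARels n) r = 1 :=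
  (QuotientGroup.eq_one_iff r).mpr (Subgroup.subset_normalClosure h)

lemma rel_braid (n : ℕ) (i : ZMod (n+1)) :
    tA n i * tA n (i+1) * tA n i = tA n (i+1) * tA n i * tA n (i+1) := by
  have h : (FreeGroup.of i * FreeGroup.of (i+1) * FreeGroup.of i *
      (FreeGroup.of (i+1) * FreeGroup.of i * FreeGroup.of (i+1))⁻¹) ∈ ArtinAffineARels n :=
    ⟨i, i+1, Or.inl ⟨rfl, rfl⟩⟩
  have h2 := relEqOne h
  simp only [map_mul, map_inv] at h2
  exact mul_inv_eq_one.mp h2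

lemma rel_comm (n : ℕ) (i j : ZMod (n+1)) (h1 : i ≠ j) (h2 : j ≠ i+1) (h3 : i ≠ j+1) :
    tA n i * tA n j = tA n j * tA n i := by
  have h : (FreeGroup.of i * FreeGroup.of j * (FreeGroup.of j * FreeGroup.of i)⁻¹)
      ∈ ArtinAffineARels n := ⟨i, j, Or.inr ⟨h1, h2, h3, rfl⟩⟩
  have h4 := relEqOne h
  simp only [map_mul, map_inv] at h4
  exact mul_inv_eq_one.mp h4

/-- nat-index generator -/
def tN (n : ℕ) (i : ℕ) : ArtinAffineA n := tA n (i : ZMod (n+1))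

lemma natCast_ne (n : ℕ) {a b : ℕ} (hab : a < b) (hbn : b ≤ a + n) :
    ((a : ZMod (n+1)) : ZMod (n+1)) ≠ (b : ZMod (n+1)) := by
  intro h
  rw [ZMod.natCast_eq_natCast_iff, Nat.modEq_iff_dvd' hab.le] at h
  have hpos : 0 < b - a := by omega
  have := Nat.le_of_dvd hpos h
  omega

lemma braidN (n : ℕ) (i : ℕ) :
    tN n i * tN n (i+1) * tN n i = tN n (i+1) * tN n i * tN n (i+1) := by
  have : ((i+1 : ℕ) : ZMod (n+1)) = (i : ZMod (n+1)) + 1 := by push_cast; ring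
  simpa only [tN, this] using rel_braid n (i : ZMod (n+1))

lemma commN (n : ℕ) {i j : ℕ} (hi : 1 ≤ i) (hij : i + 2 ≤ j) (hj : j ≤ n) :
    tN n i * tN n j = tN n j * tN n i := by
  have e1 : ((i+1 : ℕ) : ZMod (n+1)) = (i : ZMod (n+1)) + 1 := by push_cast; ring
  have e2 : ((j+1 : ℕ) : ZMod (n+1)) = (j : ZMod (n+1)) + 1 := by push_cast; ring
  have c1 : (i : ZMod (n+1)) ≠ (j : ZMod (n+1)) := natCast_ne n (by omega) (by omega)
  have c2 : (j : ZMod (n+1)) ≠ (i : ZMod (n+1)) + 1 := by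
    rw [← e1]; exact (natCast_ne n (a := i+1) (b := j) (by omega) (by omega)).symm
  have c3 : (i : ZMod (n+1)) ≠ (j : ZMod (n+1)) + 1 := by
    rw [← e2]; exact natCast_ne n (a := i) (b := j+1) (by omega) (by omega)
  exact rel_comm n _ _ c1 c2 c3

/-- prefix product t1...tk -/
def PPn (n k : ℕ) : ArtinAffineA n := ((List.range k).map (fun i => tN n (i+1))).prod
/-- shifted prefix product t2...t(m+1) -/
def Shn (n m : ℕ) : ArtinAffineA n := ((List.range m).map (fun i => tN n (i+2))).prod
/-- Garside-type product -/
def DDn (n k : ℕ) : ArtinAffineA n := ((List.range k).reverse.map (fun j => PPn n (j+1))).prod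

lemma PPn_succ (n k : ℕ) : PPn n (k+1) = PPn n k * tN n (k+1) := by
  simp [PPn, List.range_succ]

lemma Shn_succ (n m : ℕ) : Shn n (m+1) = Shn n m * tN n (m+2) := by
  simp [Shn, List.range_succ]

lemma DDn_succ (n k : ℕ) : DDn n (k+1) = PPn n (k+1) * DDn n k := by
  simp [DDn, List.range_succ]

lemma PPn_zero (n : ℕ) : PPn n 0 = 1 := rfl
lemma Shn_zero (n : ℕ) : Shn n 0 = 1 := rfl
lemma DDn_zero (n : ℕ) : DDn n 0 = 1 := rfl

lemma PPn_cons (n k : ℕ) : PPn n (k+1) = tN n 1 * Shn n k := by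
  induction k with
  | zero => simp [PPn, Shn, List.range_succ]
  | succ m ih =>
      rw [PPn_succ, ih, Shn_succ, mul_assoc]

lemma commPP (n : ℕ) {j m : ℕ} (hm : m + 2 ≤ j) (hj : j ≤ n) :
    tN n j * PPn n m = PPn n m * tN n j := by
  induction m with
  | zero => simp [PPn_zero]
  | succ m ih =>
      rw [PPn_succ, ← mul_assoc, ih (by omega), mul_assoc,
        ← commN n (i := m+1) (by omega) (by omega) hj, mul_assoc]

lemma commDD (n : ℕ) {k m : ℕ} (hm : m + 2 ≤ k) (hk : k ≤ n) :
    tN n k * DDn n m = DDn n m * tN n k := by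
  induction m with
  | zero => simp [DDn_zero]
  | succ m ih =>
      rw [DDn_succ, ← mul_assoc, commPP n (by omega) hk, mul_assoc, ih (by omega), ← mul_assoc]

lemma PPt (n : ℕ) {i k : ℕ} (hi : 1 ≤ i) (hik : i + 1 ≤ k) (hk : k ≤ n) :
    PPn n k * tN n i = tN n (i+1) * PPn n k := by
  induction k with
  | zero => omega
  | succ k ih =>
      rcases Nat.lt_or_ge (i+1) (k+1) with h | h
      · rw [PPn_succ, mul_assoc, ← commN n hi (by omega) hk, ← mul_assoc,
          ih (by omega) (by omega), mul_assoc, ← PPn_succ]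
      · obtain ⟨m, rfl⟩ : ∃ m, i = m + 1 := ⟨i - 1, by omega⟩
        have hk2 : k = m + 1 := by omega
        subst hk2
        rw [PPn_succ, PPn_succ]
        calc PPn n m * tN n (m+1) * tN n (m+2) * tN n (m+1)
            = PPn n m * (tN n (m+1) * tN n (m+2) * tN n (m+1)) := by group
          _ = PPn n m * (tN n (m+2) * tN n (m+1) * tN n (m+2)) := by rw [braidN n (m+1)]
          _ = (PPn n m * tN n (m+2)) * (tN n (m+1) * tN n (m+2)) := by group
          _ = (tN n (m+2) * PPn n m) * (tN n (m+1) * tN n (m+2)) := by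
              rw [← commPP n (by omega) hk]
          _ = tN n (m+2) * (PPn n m * tN n (m+1) * tN n (m+2)) := by group

lemma PPPP (n : ℕ) {m k : ℕ} (hmk : m + 1 ≤ k) (hk : k ≤ n) :
    PPn n k * PPn n m = Shn n m * PPn n k := by
  induction m with
  | zero => simp [PPn_zero, Shn_zero]
  | succ m ih =>
      rw [PPn_succ, ← mul_assoc, ih (by omega), mul_assoc,
        PPt n (by omega) (by omega) hk, Shn_succ]
      group

lemma DDt (n : ℕ) : ∀ k, k ≤ n → ∀ i, 1 ≤ i → i ≤ k →
    DDn n k * tN n i = tN n (k+1-i) * DDn n k := by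
  intro k
  induction k using Nat.strong_induction_on with
  | _ k ih =>
    intro hk i hi hik
    rcases Nat.lt_or_ge i k with hlt | hge
    · obtain ⟨m, rfl⟩ : ∃ m, k = m + 1 := ⟨k-1, by omega⟩
      rw [DDn_succ, mul_assoc, ih m (by omega) (by omega) i hi (by omega), ← mul_assoc,
        PPt n (i := m+1-i) (by omega) (by omega) hk, mul_assoc, ← DDn_succ]
      have e : m+1-i+1 = m+1+1-i := by omega
      rw [e]
    · have hik' : i = k := by omega
      subst hik'
      rcases Nat.lt_or_ge i 2 with h1 | h2
      · have : i = 1 := by omega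
        subst this
        have e : (1:ℕ) = 0 + 1 := rfl
        rw [show DDn n 1 = PPn n 0 * tN n 1 by rw [e, DDn_succ, PPn_succ, DDn_zero, PPn_zero]; group]
        simp [PPn_zero]
      · obtain ⟨m, rfl⟩ : ∃ m, i = m + 2 := ⟨i-2, by omega⟩
        have e1 : m + 2 = (m+1) + 1 := rfl
        have goal2 : m + 2 + 1 - (m+2) = 1 := by omega
        rw [goal2]
        calc DDn n (m+2) * tN n (m+2)
            = PPn n (m+2) * PPn n (m+1) * (DDn n m * tN n (m+2)) := by
              rw [e1, DDn_succ, DDn_succ]; group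
          _ = PPn n (m+2) * PPn n (m+1) * (tN n (m+2) * DDn n m) := by
              rw [← commDD n (by omega) hk]
          _ = PPn n (m+2) * (PPn n (m+1) * tN n (m+2)) * DDn n m := by group
          _ = PPn n (m+2) * PPn n (m+2) * DDn n m := by rw [← PPn_succ]
          _ = tN n 1 * (Shn n (m+1) * PPn n (m+2)) * DDn n m := by
              rw [show PPn n (m+2) = PPn n ((m+1)+1) from rfl, PPn_cons]; group
          _ = tN n 1 * (PPn n (m+2) * PPn n (m+1)) * DDn n m := by
              rw [← PPPP n (by omega) hk]
          _ = tN n 1 * DDn n (m+2) := by rw [e1, DDn_succ (n := n) (k := m+1), DDn_succ]; group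


lemma deltaY_eq_DD (n : ℕ) : deltaY n = DDn n n := rfl

lemma comm_delta_sq (n : ℕ) {i : ℕ} (hi : 1 ≤ i) (hin : i ≤ n) :
    Commute (DDn n n ^ 2) (tN n i) := by
  have h1 := DDt n n le_rfl i hi hin
  have h2 := DDt n n le_rfl (n+1-i) (by omega) (by omega)
  rw [show n+1-(n+1-i) = i by omega] at h2
  show DDn n n ^ 2 * tN n i = tN n i * DDn n n ^ 2
  rw [sq, mul_assoc, h1, ← mul_assoc, h2, mul_assoc]

lemma comm_D (n : ℕ) (p : ℤ) {i : ℕ} (hi : 1 ≤ i) (hin : i ≤ n) :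
    Commute (deltaY n ^ (2*p)) (tN n i) := by
  have c := comm_delta_sq n hi hin
  have e : deltaY n ^ (2*p) = (DDn n n ^ 2) ^ p := by
    rw [deltaY_eq_DD, ← zpow_natCast (DDn n n) 2, ← zpow_mul]
    norm_num
  rw [e]
  exact c.zpow_left p


lemma wpos_eq (n : ℕ) : wpos n = PPn n (n-1) := rfl

lemma comm_D_PP (n : ℕ) (p : ℤ) {k : ℕ} (hk : k ≤ n) :
    Commute (deltaY n ^ (2*p)) (PPn n k) := by
  induction k with
  | zero => rw [PPn_zero]; exact Commute.one_right _
  | succ k ih =>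
      rw [PPn_succ]
      exact (ih (by omega)).mul_right (comm_D n p (by omega) hk)

lemma alphaPP (n : ℕ) (p : ℤ) (α : ArtinAffineA n →* ArtinAffineA n)
    (hα₁ : ∀ i : ℕ, 1 ≤ i → i ≤ n →
      α (tA n (i : ZMod (n + 1))) = tA n (i : ZMod (n + 1)) * deltaY n ^ (2 * p)) :
    ∀ k, k ≤ n → α (PPn n k) = PPn n k * (deltaY n ^ (2*p)) ^ k := by
  intro k
  induction k with
  | zero => intro _; rw [PPn_zero, pow_zero, map_one, mul_one]
  | succ k ih =>
      intro hk
      have hgen : α (tN n (k+1)) = tN n (k+1) * deltaY n ^ (2*p) := hα₁ (k+1) (by omega) hk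
      rw [PPn_succ, map_mul, ih (by omega), hgen]
      have c : Commute ((deltaY n ^ (2*p))^k) (tN n (k+1)) :=
        (comm_D n p (by omega) hk).pow_left k
      calc PPn n k * (deltaY n ^ (2*p))^k * (tN n (k+1) * deltaY n ^ (2*p))
          = PPn n k * ((deltaY n ^ (2*p))^k * tN n (k+1)) * deltaY n ^ (2*p) := by group
        _ = PPn n k * (tN n (k+1) * (deltaY n ^ (2*p))^k) * deltaY n ^ (2*p) := by rw [c.eq]
        _ = PPn n k * tN n (k+1) * (deltaY n ^ (2*p))^(k+1) := by rw [pow_succ]; group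

lemma alpha_v (n : ℕ) (hn : 4 ≤ n) (p : ℤ) (α : ArtinAffineA n →* ArtinAffineA n)
    (hα₁ : ∀ i : ℕ, 1 ≤ i → i ≤ n →
      α (tA n (i : ZMod (n + 1))) = tA n (i : ZMod (n + 1)) * deltaY n ^ (2 * p)) :
    α (vZero n) = vZero n * deltaY n ^ (2 * p) := by
  set D := deltaY n ^ (2*p) with hD
  set A := PPn n (n-1) with hA
  set T := tN n n with hT
  have hwp : wpos n = A := wpos_eq n
  have hαw : α (wpos n) = A * D ^ (n-1) := by
    rw [hwp]; exact alphaPP n p α hα₁ (n-1) (by omega)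
  have hαT : α (tA n ((n : ℕ) : ZMod (n+1))) = T * D := hα₁ n (by omega) le_rfl
  have cDA : Commute D A := comm_D_PP n p (by omega)
  have cDT : Commute D T := comm_D n p (by omega) le_rfl
  have c1 : Commute (D^(n-1)) (T * D) :=
    ((cDT.symm.pow_right (n-1)).symm.mul_right ((Commute.refl D).pow_left (n-1)))
  have key : D^(n-1) * (T * D) * (D^(n-1))⁻¹ = T * D := by
    rw [mul_inv_eq_iff_eq_mul]; exact c1.eq
  have hv : vZero n = A * T * A⁻¹ := by rw [vZero, hwp]; rfl
  rw [vZero, map_mul, map_mul, map_inv, hαw, hαT]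
  calc A * D^(n-1) * (T * D) * (A * D^(n-1))⁻¹
      = A * (D^(n-1) * (T * D) * (D^(n-1))⁻¹) * A⁻¹ := by group
    _ = A * (T * D) * A⁻¹ := by rw [key]
    _ = A * T * (D * A⁻¹) := by group
    _ = A * T * (A⁻¹ * D) := by rw [cDA.inv_right.eq]
    _ = wpos n * tA n ((n : ℕ) : ZMod (n+1)) * (wpos n)⁻¹ * D := by
        rw [hwp]
        show A * T * (A⁻¹ * D) = A * T * A⁻¹ * D
        group

lemma gen_mem (n : ℕ) {i : ℕ} (hi : 1 ≤ i) (hin : i ≤ n) : tN n i ∈ parabolicY n :=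
  Subgroup.subset_closure ⟨i, hi, hin, rfl⟩

lemma PP_mem (n : ℕ) {k : ℕ} (hk : k ≤ n) : PPn n k ∈ parabolicY n := by
  induction k with
  | zero => rw [PPn_zero]; exact one_mem _
  | succ k ih =>
      rw [PPn_succ]
      exact mul_mem (ih (by omega)) (gen_mem n (by omega) hk)

lemma DD_mem (n : ℕ) {k : ℕ} (hk : k ≤ n) : DDn n k ∈ parabolicY n := by
  induction k with
  | zero => rw [DDn_zero]; exact one_mem _
  | succ k ih =>
      rw [DDn_succ]
      exact mul_mem (PP_mem n hk) (ih (by omega))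

lemma delta_mem (n : ℕ) : deltaY n ∈ parabolicY n := by
  rw [deltaY_eq_DD]; exact DD_mem n le_rfl

lemma wpos_mem (n : ℕ) : wpos n ∈ parabolicY n := by
  rw [wpos_eq]; exact PP_mem n (by omega)

lemma vZero_mem (n : ℕ) (hn : 1 ≤ n) : vZero n ∈ parabolicY n :=
  mul_mem (mul_mem (wpos_mem n) (gen_mem n hn le_rfl)) (inv_mem (wpos_mem n))

/-- the affine permutation corresponding to generator i -/
def sFun (n : ℕ) (i : ZMod (n+1)) (x : ℤ) : ℤ :=
  if (x : ZMod (n+1)) = i then x + 1 else if (x : ZMod (n+1)) = i + 1 then x - 1 else x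

section Perm
variable {n : ℕ} (hn : 4 ≤ n)

include hn

lemma zmod_one_ne : (1 : ZMod (n+1)) ≠ 0 := by
  intro h
  rw [show (1 : ZMod (n+1)) = ((1:ℕ) : ZMod (n+1)) by norm_num,
    ZMod.natCast_eq_zero_iff] at h
  have := Nat.le_of_dvd one_pos h
  omega

lemma zmod_two_ne : (2 : ZMod (n+1)) ≠ 0 := by
  intro h
  rw [show (2 : ZMod (n+1)) = ((2:ℕ) : ZMod (n+1)) by norm_num,
    ZMod.natCast_eq_zero_iff] at h
  have := Nat.le_of_dvd two_pos h
  omega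

lemma add_one_ne (a : ZMod (n+1)) : a + 1 ≠ a := by
  intro h
  exact zmod_one_ne hn (by linear_combination h)

lemma add_two_ne (a : ZMod (n+1)) : a + 2 ≠ a := by
  intro h
  exact zmod_two_ne hn (by linear_combination h)

omit hn

lemma sFun_eq {i : ZMod (n+1)} {x : ℤ} (h : (x : ZMod (n+1)) = i) : sFun n i x = x + 1 :=
  if_pos h

include hn

lemma sFun_eq' {i : ZMod (n+1)} {x : ℤ} (h : (x : ZMod (n+1)) = i + 1) : sFun n i x = x - 1 := by
  rw [sFun, if_neg, if_pos h]
  rw [h]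
  exact add_one_ne hn i

omit hn

lemma sFun_ne {i : ZMod (n+1)} {x : ℤ} (h1 : (x : ZMod (n+1)) ≠ i)
    (h2 : (x : ZMod (n+1)) ≠ i + 1) : sFun n i x = x := by
  rw [sFun, if_neg h1, if_neg h2]

lemma cast_add_one (x : ℤ) : ((x + 1 : ℤ) : ZMod (n+1)) = (x : ZMod (n+1)) + 1 := by push_cast; ring
lemma cast_sub_one (x : ℤ) : ((x - 1 : ℤ) : ZMod (n+1)) = (x : ZMod (n+1)) - 1 := by push_cast; ring

include hn

lemma sFun_invol (i : ZMod (n+1)) : Function.Involutive (sFun n i) := by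
  intro x
  by_cases h1 : (x : ZMod (n+1)) = i
  · rw [sFun_eq h1, sFun_eq' hn (by rw [cast_add_one, h1]),]
    ring
  · by_cases h2 : (x : ZMod (n+1)) = i + 1
    · rw [sFun_eq' hn h2, sFun_eq (by rw [cast_sub_one, h2]; ring)]
      ring
    · rw [sFun_ne h1 h2, sFun_ne h1 h2]

/-- generator permutations -/
noncomputable def sP (i : ZMod (n+1)) : Equiv.Perm ℤ :=
  Function.Involutive.toPerm _ (sFun_invol hn i)

lemma sP_apply (i : ZMod (n+1)) (x : ℤ) : sP hn i x = sFun n i x := rfl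

lemma sP_braid (i : ZMod (n+1)) :
    sP hn i * sP hn (i+1) * sP hn i = sP hn (i+1) * sP hn i * sP hn (i+1) := by
  have n1 : ∀ a : ZMod (n+1), a + 1 ≠ a := add_one_ne hn
  have n2 : ∀ a : ZMod (n+1), a + 1 + 1 ≠ a := fun a h => zmod_two_ne hn (by linear_combination h)
  have n3 : ∀ a : ZMod (n+1), a + 1 + 1 ≠ a + 1 := fun a => n1 (a+1)
  ext x
  simp only [Equiv.Perm.mul_apply, sP_apply]
  by_cases h1 : (x : ZMod (n+1)) = i
  · have hbx1 : (x : ZMod (n+1)) ≠ i + 1 := by rw [h1]; exact (n1 i).symm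
    have hbx2 : (x : ZMod (n+1)) ≠ i + 1 + 1 := by rw [h1]; exact (n2 i).symm
    have hx1 : ((x+1 : ℤ) : ZMod (n+1)) = i + 1 := by rw [cast_add_one, h1]
    have hA : ((x+1+1 : ℤ) : ZMod (n+1)) = i + 1 + 1 := by
      rw [cast_add_one, cast_add_one, h1]
    rw [sFun_ne hbx1 hbx2, sFun_eq h1, sFun_eq hx1,
      sFun_ne (by rw [hA]; exact n2 i) (by rw [hA]; exact n3 i)]
  · by_cases h2 : (x : ZMod (n+1)) = i + 1
    · have hm : ((x-1 : ℤ) : ZMod (n+1)) = i := by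
        rw [cast_sub_one, h2, add_sub_cancel_right]
      have hp : ((x+1 : ℤ) : ZMod (n+1)) = i + 1 + 1 := by rw [cast_add_one, h2]
      rw [sFun_eq h2, sFun_eq' hn h2,
        sFun_ne (i := i+1) (by rw [hm]; exact (n1 i).symm) (by rw [hm]; exact (n2 i).symm),
        sFun_eq hm,
        sFun_ne (i := i) (by rw [hp]; exact n2 i) (by rw [hp]; exact n3 i),
        sFun_eq' hn (i := i+1) hp]
      omega
    · by_cases h3 : (x : ZMod (n+1)) = i + 1 + 1
      · have hm : ((x-1 : ℤ) : ZMod (n+1)) = i + 1 := by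
          rw [cast_sub_one, h3, add_sub_cancel_right]
        have hmm : ((x-1-1 : ℤ) : ZMod (n+1)) = i := by
          rw [cast_sub_one, hm, add_sub_cancel_right]
        rw [sFun_ne h1 h2, sFun_eq' hn (i := i+1) h3, sFun_eq' hn (i := i) hm,
          sFun_ne (i := i+1) (by rw [hmm]; exact (n1 i).symm) (by rw [hmm]; exact (n2 i).symm)]
      · rw [sFun_ne h2 h3, sFun_ne h1 h2, sFun_ne h2 h3, sFun_ne h1 h2]

lemma sP_comm (i j : ZMod (n+1)) (h1 : i ≠ j) (h2 : j ≠ i + 1) (h3 : i ≠ j + 1) :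
    sP hn i * sP hn j = sP hn j * sP hn i := by
  have n1 : ∀ a : ZMod (n+1), a + 1 ≠ a := add_one_ne hn
  have h4 : i + 1 ≠ j + 1 := fun h => h1 (by linear_combination h)
  ext x
  simp only [Equiv.Perm.mul_apply, sP_apply]
  by_cases hx1 : (x : ZMod (n+1)) = i
  · have hp : ((x+1 : ℤ) : ZMod (n+1)) = i + 1 := by rw [cast_add_one, hx1]
    rw [sFun_ne (i := j) (by rw [hx1]; exact h1) (by rw [hx1]; exact h3),
      sFun_eq hx1,
      sFun_ne (i := j) (by rw [hp]; exact fun h => h2 h.symm) (by rw [hp]; exact h4)]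
  · by_cases hx2 : (x : ZMod (n+1)) = i + 1
    · have hm : ((x-1 : ℤ) : ZMod (n+1)) = i := by
        rw [cast_sub_one, hx2, add_sub_cancel_right]
      rw [sFun_ne (i := j) (by rw [hx2]; exact fun h => h2 h.symm) (by rw [hx2]; exact h4),
        sFun_eq' hn hx2,
        sFun_ne (i := j) (by rw [hm]; exact h1) (by rw [hm]; exact h3)]
    · by_cases hx3 : (x : ZMod (n+1)) = j
      · have hp : ((x+1 : ℤ) : ZMod (n+1)) = j + 1 := by rw [cast_add_one, hx3]
        rw [sFun_ne (i := i) (x := x) (by rw [hx3]; exact h1.symm) (by rw [hx3]; exact h2),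
          sFun_eq hx3,
          sFun_ne (i := i) (x := x+1) (by rw [hp]; exact fun h => h3 h.symm)
            (by rw [hp]; exact h4.symm)]
      · by_cases hx4 : (x : ZMod (n+1)) = j + 1
        · have hm : ((x-1 : ℤ) : ZMod (n+1)) = j := by
            rw [cast_sub_one, hx4, add_sub_cancel_right]
          rw [sFun_ne (i := i) (x := x) (by rw [hx4]; exact fun h => h3 h.symm)
              (by rw [hx4]; exact h4.symm),
            sFun_eq' hn hx4,
            sFun_ne (i := i) (x := x-1) (by rw [hm]; exact h1.symm) (by rw [hm]; exact h2)]
        · simp only [sFun_ne hx1 hx2, sFun_ne hx3 hx4]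

end Perm

noncomputable def phi (n : ℕ) (hn : 4 ≤ n) : ArtinAffineA n →* Equiv.Perm ℤ :=
  PresentedGroup.toGroup (f := sP hn) (by
    rintro r ⟨i, j, (⟨rfl, rfl⟩ | ⟨h1, h2, h3, rfl⟩)⟩
    · simp only [map_mul, map_inv, FreeGroup.lift_apply_of]
      rw [mul_inv_eq_one]
      exact sP_braid hn i
    · simp only [map_mul, map_inv, FreeGroup.lift_apply_of]
      rw [mul_inv_eq_one]
      exact sP_comm hn i j h1 h2 h3)

lemma phi_of (n : ℕ) (hn : 4 ≤ n) (i : ZMod (n+1)) : phi n hn (tA n i) = sP hn i :=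
  PresentedGroup.toGroup.of _

/-- the subgroup of permutations preserving the window [1, n+1] -/
def permW (n : ℕ) : Subgroup (Equiv.Perm ℤ) where
  carrier := {σ | ∀ x : ℤ, x ∈ Set.Icc (1:ℤ) ((n:ℤ)+1) ↔ σ x ∈ Set.Icc (1:ℤ) ((n:ℤ)+1)}
  one_mem' := by intro x; rfl
  mul_mem' := by
    intro σ τ hσ hτ x
    rw [hτ x]
    exact hσ (τ x)
  inv_mem' := by
    intro σ hσ x
    constructor
    · intro hx
      rw [hσ (σ⁻¹ x), ← Equiv.Perm.mul_apply, mul_inv_cancel, Equiv.Perm.one_apply]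
      exact hx
    · intro hx
      rw [hσ (σ⁻¹ x)] at hx
      rwa [← Equiv.Perm.mul_apply, mul_inv_cancel, Equiv.Perm.one_apply] at hx

lemma mem_permW {n : ℕ} {σ : Equiv.Perm ℤ} :
    σ ∈ permW n ↔ ∀ x : ℤ, x ∈ Set.Icc (1:ℤ) ((n:ℤ)+1) ↔ σ x ∈ Set.Icc (1:ℤ) ((n:ℤ)+1) :=
  Iff.rfl

lemma win_unique (n : ℕ) {x y : ℤ} (hx : x ∈ Set.Icc (1:ℤ) ((n:ℤ)+1))
    (hy : y ∈ Set.Icc (1:ℤ) ((n:ℤ)+1)) (h : (x : ZMod (n+1)) = (y : ZMod (n+1))) : x = y := by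
  have hz : ((x - y : ℤ) : ZMod (n+1)) = 0 := by push_cast; rw [h]; ring
  rw [ZMod.intCast_zmod_eq_zero_iff_dvd] at hz
  obtain ⟨k, hk⟩ := hz
  obtain ⟨hx1, hx2⟩ := hx
  obtain ⟨hy1, hy2⟩ := hy
  push_cast at hk
  rcases lt_trichotomy k 0 with hlt | rfl | hgt
  · nlinarith
  · omega
  · nlinarith

lemma sFun_mapsTo (n : ℕ) (hn : 4 ≤ n) {i : ℕ} (hi : 1 ≤ i) (hin : i ≤ n) :
    ∀ x ∈ Set.Icc (1:ℤ) ((n:ℤ)+1), sFun n (i : ZMod (n+1)) x ∈ Set.Icc (1:ℤ) ((n:ℤ)+1) := by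
  intro x hx
  have hiW : (i : ℤ) ∈ Set.Icc (1:ℤ) ((n:ℤ)+1) := by
    simp only [Set.mem_Icc]
    omega
  have hi1W : ((i : ℤ)+1) ∈ Set.Icc (1:ℤ) ((n:ℤ)+1) := by
    simp only [Set.mem_Icc]
    omega
  by_cases h : (x : ZMod (n+1)) = (i : ZMod (n+1))
  · have hxe : x = (i : ℤ) := win_unique n hx hiW (by rw [h]; push_cast; ring)
    rw [sFun_eq h, hxe]
    obtain ⟨h1, h2⟩ := hx
    simp only [Set.mem_Icc]
    omega
  · by_cases h2 : (x : ZMod (n+1)) = (i : ZMod (n+1)) + 1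
    · have hxe : x = (i : ℤ) + 1 := by
        apply win_unique n hx hi1W
        rw [h2]; push_cast; ring
      rw [sFun_eq' hn h2, hxe]
      simp only [Set.mem_Icc]
      omega
    · rwa [sFun_ne h h2]

lemma sP_mem (n : ℕ) (hn : 4 ≤ n) {i : ℕ} (hi : 1 ≤ i) (hin : i ≤ n) :
    sP hn ((i : ℕ) : ZMod (n+1)) ∈ permW n := by
  rw [mem_permW]
  intro x
  constructor
  · intro hx
    exact sFun_mapsTo n hn hi hin x hx
  · intro hx
    have h2 := sFun_mapsTo n hn hi hin _ hx
    rwa [show sP hn ((i : ℕ) : ZMod (n+1)) x = sFun n (i : ZMod (n+1)) x from rfl,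
      sFun_invol hn _ x] at h2

/-- The endomorphism `α_p` of `A[Ã n]` (`n ≥ 4`) is neither injective nor
surjective: `α_p t₀ = α_p v₀` while `t₀ ≠ v₀`, and its image is contained in
the proper standard parabolic subgroup `A_Y`, which does not contain `t₀`. -/
theorem stmt17 (n : ℕ) (hn : 4 ≤ n) (p : ℤ)
    (α : ArtinAffineA n →* ArtinAffineA n)
    (hα₁ : ∀ i : ℕ, 1 ≤ i → i ≤ n →
      α (tA n (i : ZMod (n + 1))) = tA n (i : ZMod (n + 1)) * deltaY n ^ (2 * p))
    (hα₀ : α (tA n 0) = vZero n * deltaY n ^ (2 * p)) :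
    α (tA n 0) = α (vZero n) ∧ tA n 0 ≠ vZero n ∧
    ¬ Function.Injective α ∧
    (∀ a : ArtinAffineA n, α a ∈ parabolicY n) ∧
    tA n 0 ∉ parabolicY n ∧
    ¬ Function.Surjective α := by
  have hαv : α (vZero n) = vZero n * deltaY n ^ (2*p) := alpha_v n hn p α hα₁
  have h0v : α (tA n 0) = α (vZero n) := by rw [hα₀, hαv]
  have hpara_le : parabolicY n ≤ (permW n).comap (phi n hn) := by
    apply (Subgroup.closure_le _).mpr
    rintro g ⟨i, hi, hin, rfl⟩
    have : phi n hn (tA n (i : ZMod (n+1))) ∈ permW n := by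
      rw [phi_of]
      exact sP_mem n hn hi hin
    exact this
  have ht0 : tA n 0 ∉ parabolicY n := by
    intro hmem
    have hc := hpara_le hmem
    rw [Subgroup.mem_comap, phi_of, mem_permW] at hc
    have h1W : (1:ℤ) ∈ Set.Icc (1:ℤ) ((n:ℤ)+1) := by constructor <;> omega
    have h0 : sP hn (0 : ZMod (n+1)) 1 = 0 := by
      rw [sP_apply, sFun_eq' hn (by rw [zero_add, Int.cast_one])]
      ring
    have := (hc 1).mp h1W
    rw [h0] at this
    exact absurd this.1 (by omega)
  have hvmem : vZero n ∈ parabolicY n := vZero_mem n (by omega)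
  have hne : tA n 0 ≠ vZero n := fun h => ht0 (h ▸ hvmem)
  have hninj : ¬Function.Injective α := fun hinj => hne (hinj h0v)
  have himg : ∀ a, α a ∈ parabolicY n := by
    intro a
    refine PresentedGroup.generated_by _ ((parabolicY n).comap α) ?_ a
    intro j
    change α (PresentedGroup.of j) ∈ parabolicY n
    show α (tA n j) ∈ parabolicY n
    by_cases hj : j = 0
    · subst hj
      rw [hα₀]
      exact mul_mem hvmem (zpow_mem (delta_mem n) _)
    · have h1 : 1 ≤ j.val := by
        have := ZMod.val_pos.mpr hj
        omega
      have h2 : j.val ≤ n := by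
        have := ZMod.val_lt j
        omega
      have hval : ((j.val : ℕ) : ZMod (n+1)) = j := ZMod.natCast_zmod_val j
      rw [← hval, hα₁ j.val h1 h2]
      exact mul_mem (gen_mem n h1 h2) (zpow_mem (delta_mem n) _)
  have hnsurj : ¬Function.Surjective α := by
    intro hs
    obtain ⟨a, ha⟩ := hs (tA n 0)
    exact ht0 (ha ▸ himg a)
  exact ⟨h0v, hne, hninj, himg, ht0, hnsurj⟩
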